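/- arXiv:1703.08828 — 6 statements merged into one kernel-verified Lean document; each statement's English description precedes it below -/
import Mathlib

section
/- Let S be a subset of the non-negative integers with 0 in S, whose complement in Z_{>=0} is finite with largest element 2g - 1 (so S contains all integers >= 2g, and exactly g elements of [0, 2g) lie outside S in the 'symmetric' case). Define phi(m) = #(S intersect [0, m)) for integers m >= 0, extended by phi(m) = 0 for m < 0, and Phi(t, m) = phi(m) - t*m/2 for real t in [0,2]. Suppose S satisfies the symmetry #(S intersect [0, 2g)) = g and phi(2g - v) = g - v + phi(v) for all 0 <= v <= 2g. Then for all real s in [0, 2]: max over v in {1, ..., 2g-1} of (-2*phi(v) - s*(g - v)) equals max over v in {1, ..., 2g-1} of (-2*phi(v) - (2-s)*(g - v)). That is, the truncated Upsilon function Upsilon^{tr}(s) := max_{1<=v<=2g-1} (-2 phi(v) - s(g-v)) satisfies Upsilon^{tr}(s) = Upsilon^{tr}(2-s). -/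
lemma key_aux (g : ℕ) (phi : ℕ → ℕ)
    (hsym : ∀ v ≤ 2 * g, (phi (2 * g - v) : ℤ) = (g : ℤ) - v + phi v)
    (s : ℝ) (v : ℕ) (h1 : 1 ≤ v) (h2 : v ≤ 2 * g - 1) (hg : 1 ≤ g) :
    (-2 * (phi v : ℝ) - s * ((g : ℝ) - v)) =
      -2 * (phi (2 * g - v) : ℝ) - (2 - s) * ((g : ℝ) - (2 * g - v : ℕ)) := by
  have hv : v ≤ 2 * g := by omega
  have h := hsym v hv
  have hc : ((2 * g - v : ℕ) : ℝ) = 2 * g - v := by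
    push_cast [Nat.cast_sub hv]; ring
  have hphiR : (phi (2 * g - v) : ℝ) = (g : ℝ) - v + phi v := by
    exact_mod_cast congrArg (Int.cast : ℤ → ℝ) h
  rw [hphiR, hc]; ring

theorem sup_sym (g : ℕ) (hg : 1 ≤ g) (phi : ℕ → ℕ)
    (hsym : ∀ v ≤ 2 * g, (phi (2 * g - v) : ℤ) = (g : ℤ) - v + phi v)
    (s : ℝ) :
    ((Finset.Icc 1 (2 * g - 1)).sup' (Finset.nonempty_Icc.mpr (by omega))
        fun v => -2 * (phi v : ℝ) - s * ((g : ℝ) - v)) ≤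
    ((Finset.Icc 1 (2 * g - 1)).sup' (Finset.nonempty_Icc.mpr (by omega))
        fun v => -2 * (phi v : ℝ) - (2 - s) * ((g : ℝ) - v)) := by
  apply Finset.sup'_le
  intro v hv
  rw [Finset.mem_Icc] at hv
  obtain ⟨hv1, hv2⟩ := hv
  rw [key_aux g phi hsym s v hv1 hv2 hg]
  have hm : 2 * g - v ∈ Finset.Icc 1 (2 * g - 1) := Finset.mem_Icc.mpr ⟨by omega, by omega⟩
  exact Finset.le_sup' (fun v => -2 * (phi v : ℝ) - (2 - s) * ((g : ℝ) - v)) hm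

/-- Symmetry of the truncated Upsilon function: `Υ^tr(s) = Υ^tr(2-s)`. -/
theorem stmt4 (g : ℕ) (hg : 1 ≤ g) (S : Set ℕ) (h0 : 0 ∈ S)
    (hup : ∀ m, 2 * g ≤ m → m ∈ S) (htop : 2 * g - 1 ∉ S)
    (phi : ℕ → ℕ) (hphi : ∀ m, phi m = (S ∩ Set.Iio m).ncard)
    (hcard : phi (2 * g) = g)
    (hsym : ∀ v ≤ 2 * g, (phi (2 * g - v) : ℤ) = (g : ℤ) - v + phi v)
    (s : ℝ) (hs : s ∈ Set.Icc (0 : ℝ) 2) :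
    ((Finset.Icc 1 (2 * g - 1)).sup' (Finset.nonempty_Icc.mpr (by omega))
        fun v => -2 * (phi v : ℝ) - s * ((g : ℝ) - v)) =
    ((Finset.Icc 1 (2 * g - 1)).sup' (Finset.nonempty_Icc.mpr (by omega))
        fun v => -2 * (phi v : ℝ) - (2 - s) * ((g : ℝ) - v)) := by
  apply le_antisymm
  · exact sup_sym g hg phi hsym s
  · have := sup_sym g hg phi hsym (2 - s)
    simpa using this
end

section
/- Let S be a subset of Z_{>=0} containing 0 whose complement in Z_{>=0} is finite with maximum 2g-1 (for some g >= 1), satisfying the symmetry phi(2g - v) = g - v + phi(v) for 0 <= v <= 2g where phi(m) := #(S intersect [0, m)). Define Upsilon(s) = max over m in {0, 1, ..., 2g} of (-2*phi(m) - s*(g - m)) for s in [0, 2]. Then Upsilon(s) = Upsilon(2 - s) for all s in [0, 2]. -/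
/-- Symmetry of the Upsilon invariant of an L-space knot: `Υ(s) = Υ(2-s)`. -/
theorem stmt5 (g : ℕ) (hg : 1 ≤ g) (S : Set ℕ) (h0 : 0 ∈ S)
    (hup : ∀ m, 2 * g ≤ m → m ∈ S) (htop : 2 * g - 1 ∉ S)
    (phi : ℕ → ℕ) (hphi : ∀ m, phi m = (S ∩ Set.Iio m).ncard)
    (hsym : ∀ v ≤ 2 * g, (phi (2 * g - v) : ℤ) = (g : ℤ) - v + phi v)
    (s : ℝ) (hs : s ∈ Set.Icc (0 : ℝ) 2) :
    ((Finset.Icc 0 (2 * g)).sup' (Finset.nonempty_Icc.mpr (by omega))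
        fun m => -2 * (phi m : ℝ) - s * ((g : ℝ) - m)) =
    ((Finset.Icc 0 (2 * g)).sup' (Finset.nonempty_Icc.mpr (by omega))
        fun m => -2 * (phi m : ℝ) - (2 - s) * ((g : ℝ) - m)) := by
  have key : ∀ v ≤ 2 * g,
      -2 * (phi (2 * g - v) : ℝ) - s * ((g : ℝ) - (2 * g - v : ℕ)) =
      -2 * (phi v : ℝ) - (2 - s) * ((g : ℝ) - v) := by
    intro v hv
    have h1 : (phi (2 * g - v) : ℝ) = (g : ℝ) - v + phi v := by
      have := hsym v hv
      have : ((phi (2 * g - v) : ℤ) : ℝ) = (((g : ℤ) - v + phi v : ℤ) : ℝ) := by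
        exact_mod_cast congrArg (fun z : ℤ => (z : ℝ)) this
      push_cast at this
      linarith
    have h2 : ((2 * g - v : ℕ) : ℝ) = 2 * g - v := by
      have : (v : ℝ) ≤ 2 * g := by exact_mod_cast hv
      push_cast [Nat.cast_sub hv]
      ring
    rw [h1, h2]; ring
  apply le_antisymm
  · apply Finset.sup'_le
    intro m hm
    simp only [Finset.mem_Icc] at hm
    have hm' : 2 * g - m ≤ 2 * g := by omega
    have hkey := key (2 * g - m) hm'
    have hmm : 2 * g - (2 * g - m) = m := by omega
    rw [hmm] at hkey
    calc -2 * (phi m : ℝ) - s * ((g : ℝ) - m)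
        = -2 * (phi (2 * g - m) : ℝ) - (2 - s) * ((g : ℝ) - (2 * g - m : ℕ)) := by
          have hkey2 := key m hm.2
          -- hkey2 : f_s (2g-m) = f_{2-s}(m), we need f_s(m) = f_{2-s}(2g-m), use hkey
          linarith [hkey]
      _ ≤ _ := Finset.le_sup' (fun m : ℕ => -2 * (phi m : ℝ) - (2 - s) * ((g : ℝ) - m))
          (Finset.mem_Icc.mpr ⟨Nat.zero_le _, by omega⟩)
  · apply Finset.sup'_le
    intro m hm
    simp only [Finset.mem_Icc] at hm
    have hkey := key m hm.2
    calc -2 * (phi m : ℝ) - (2 - s) * ((g : ℝ) - m)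
        = -2 * (phi (2 * g - m) : ℝ) - s * ((g : ℝ) - (2 * g - m : ℕ)) := hkey.symm
      _ ≤ _ := Finset.le_sup' (fun m : ℕ => -2 * (phi m : ℝ) - s * ((g : ℝ) - m))
          (Finset.mem_Icc.mpr ⟨Nat.zero_le _, by omega⟩)
end

section
/- Let p >= 2 and q be coprime positive integers, g >= 0, and let S_K be a subset of Z_{>=0} containing 0 with Z_{>=2g} subset of S_K and #(S_K intersect [0,2g)) = g. Assume 2gp <= q. Define S = p*S_K + q*Z_{>=0} = { p*a + q*b : a in S_K, b in Z_{>=0} }, and phi(m) = #(S intersect [0, m)), Phi(t,m) = phi(m) - t*m/2. Fix an integer i with 0 <= i < p and a real t with 2i/p <= t <= 2(i+1)/p. Then the minimum of Phi(t, m) over all integers m with 0 <= m <= 2(pg + (p-1)(q-1)/2) equals the minimum of Phi(t, m) over integers m with iq - p < m <= iq + 2gp. -/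
open Classical in
private lemma countA' (p q i : ℕ) (hp : 2 ≤ p) (hq : 0 < q) (hpq : Nat.Coprime p q)
    (S : Set ℕ)
    (hmem : ∀ n ∈ S, ∃ a : ℕ, ∃ b : ℕ, n = p * a + q * b)
    (a : ℕ) (ha : a + p ≤ i * q) :
    ((Finset.Ico a (a+p)).filter (· ∈ S)).card ≤ i := by
  haveI : NeZero p := ⟨by omega⟩
  have hu : IsUnit (q : ZMod p) := (ZMod.isUnit_iff_coprime q p).2 hpq.symm
  have := Finset.card_le_card_of_injOn
    (f := fun n : ℕ => (((q : ZMod p))⁻¹ * (n : ZMod p)).val)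
    (s := (Finset.Ico a (a+p)).filter (· ∈ S)) (t := Finset.range i) ?_ ?_
  · exact (Finset.card_range i) ▸ this
  · intro n hn
    simp only [Finset.mem_coe, Finset.mem_filter, Finset.mem_Ico] at hn
    obtain ⟨⟨hn1, hn2⟩, hnS⟩ := hn
    obtain ⟨α, β, rfl⟩ := hmem n hnS
    have hcast : (((q : ZMod p))⁻¹ * ((p * α + q * β : ℕ) : ZMod p)).val = β % p := by
      push_cast
      rw [ZMod.natCast_self, zero_mul, zero_add, ← mul_assoc,
        ZMod.inv_mul_of_unit _ hu, one_mul, ZMod.val_natCast]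
    rw [Finset.mem_coe, Finset.mem_range]
    simp only [hcast]
    by_contra hcon
    push_neg at hcon
    have h1 : q * i ≤ q * (β % p) := Nat.mul_le_mul_left q hcon
    have h2 : q * (β % p) ≤ q * β := Nat.mul_le_mul_left q (Nat.mod_le β p)
    have hqi : i * q = q * i := Nat.mul_comm _ _
    omega
  · intro n₁ h₁ n₂ h₂ hf
    simp only [Finset.mem_coe, Finset.mem_filter, Finset.mem_Ico] at h₁ h₂
    have heq : ((n₁ : ZMod p)) = (n₂ : ZMod p) := by
      have := ZMod.val_injective p hf
      have := congrArg (fun x => (q : ZMod p) * x) this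
      simpa [← mul_assoc, ZMod.mul_inv_of_unit _ hu] using this
    have hmod : n₁ ≡ n₂ [MOD p] := (ZMod.natCast_eq_natCast_iff _ _ _).1 heq
    exact hmod.eq_of_abs_lt (by rw [abs_sub_lt_iff]; constructor <;> push_cast <;> omega)

open Classical in
private lemma countB' (p q g i : ℕ) (hp : 2 ≤ p) (hpq : Nat.Coprime p q) (hi : i < p)
    (S : Set ℕ)
    (hmem : ∀ a : ℕ, 2 * g ≤ a → ∀ b : ℕ, p * a + q * b ∈ S)
    (m : ℤ) (hm : (i:ℤ)*q + 2*g*p < m) :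
    i + 1 ≤ ((Finset.Ico (m-p).toNat m.toNat).filter (· ∈ S)).card := by
  haveI : NeZero p := ⟨by omega⟩
  have hp0 : (0:ℤ) < p := by exact_mod_cast (by omega : 0 < p)
  set e : ℕ → ℤ := fun b => m - 1 - ((m - 1 - q*b) % p) with he
  have hlow : ∀ b : ℕ, m - p ≤ e b := by
    intro b
    have := Int.emod_lt_of_pos (m - 1 - q*b) hp0
    simp only [he]; omega
  have hhigh : ∀ b : ℕ, e b < m := by
    intro b
    have := Int.emod_nonneg (m - 1 - q*b) (by omega : (p:ℤ) ≠ 0)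
    simp only [he]; omega
  have hdecomp : ∀ b : ℕ, b ≤ i → ∃ a : ℕ, 2 * g ≤ a ∧ e b = p * a + q * b := by
    intro b hb
    obtain ⟨a', ha'⟩ : ∃ a' : ℤ, e b - q * b = p * a' :=
      ⟨(m - 1 - q*b) / p, by simp only [he]; rw [Int.emod_def]; ring⟩
    have hqb : (q:ℤ) * b ≤ q * i := by
      have : (b:ℤ) ≤ i := by exact_mod_cast hb
      exact mul_le_mul_of_nonneg_left this (by positivity)
    have hlow' := hlow b
    have ha'2 : (2*g : ℤ) ≤ a' := by nlinarith [hhigh b]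
    refine ⟨a'.toNat, ?_, ?_⟩
    · omega
    · have h2 : ((a'.toNat : ℤ)) = a' := Int.toNat_of_nonneg (by omega)
      push_cast
      rw [h2]
      omega
  have hm0 : (0:ℤ) < m := by
    have : (0:ℤ) ≤ i*q + 2*g*p := by positivity
    omega
  have hcard := Finset.card_le_card_of_injOn (f := fun b => (e b).toNat)
    (s := Finset.range (i+1)) (t := (Finset.Ico (m-p).toNat m.toNat).filter (· ∈ S)) ?_ ?_
  · simpa using hcard
  · intro b hb
    rw [Finset.mem_coe, Finset.mem_range] at hb
    obtain ⟨a, hag, hab⟩ := hdecomp b (by omega)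
    have hab' : e b = ((p * a + q * b : ℕ) : ℤ) := by push_cast; exact hab
    have h0 : (0:ℤ) ≤ e b := by rw [hab']; positivity
    have hl := hlow b
    have hh := hhigh b
    simp only [Finset.mem_coe, Finset.mem_filter, Finset.mem_Ico]
    refine ⟨⟨by omega, by omega⟩, ?_⟩
    have : (e b).toNat = p * a + q * b := by omega
    simpa [this] using hmem a hag b
  · intro b₁ h₁ b₂ h₂ hf
    rw [Finset.mem_coe, Finset.mem_range] at h₁ h₂
    obtain ⟨a₁, ha₁g, hab₁⟩ := hdecomp b₁ (by omega)
    obtain ⟨a₂, ha₂g, hab₂⟩ := hdecomp b₂ (by omega)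
    have hab₁' : e b₁ = ((p * a₁ + q * b₁ : ℕ) : ℤ) := by push_cast; exact hab₁
    have hab₂' : e b₂ = ((p * a₂ + q * b₂ : ℕ) : ℤ) := by push_cast; exact hab₂
    have hfn : (p * a₁ + q * b₁ : ℕ) = (p * a₂ + q * b₂ : ℕ) := by
      simp only [hab₁', hab₂', Int.toNat_natCast] at hf
      exact hf
    have hmod : q * b₁ ≡ q * b₂ [MOD p] := by
      show q * b₁ % p = q * b₂ % p
      rw [← Nat.mul_add_mod p a₁ (q*b₁), ← Nat.mul_add_mod p a₂ (q*b₂), hfn]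
    have : b₁ ≡ b₂ [MOD p] := Nat.ModEq.cancel_left_of_coprime hpq hmod
    exact this.eq_of_lt_of_lt (by omega) (by omega)

private lemma frob' (p q g : ℕ) (hp : 2 ≤ p) (hq : 0 < q) (hpq : Nat.Coprime p q)
    (SK : Set ℕ) (hup : ∀ m, 2 * g ≤ m → m ∈ SK)
    (S : Set ℕ) (hS : S = {n : ℕ | ∃ a ∈ SK, ∃ b : ℕ, n = p * a + q * b})
    (n : ℕ) (hn : 2 * p * g + (p - 1) * (q - 1) ≤ n) : n ∈ S := by
  subst hS
  rcases eq_or_lt_of_le (show 1 ≤ q from hq) with hq1 | hq2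
  · refine ⟨2 * g, hup _ le_rfl, n - 2 * p * g, ?_⟩
    rw [← hq1]
    have e0 : (p-1) * (q-1) = 0 := by rw [← hq1]; simp
    have e1 : p * (2*g) = 2*p*g := by ring
    omega
  · set m := n - 2 * p * g with hm
    have hm1 : (p - 1) * (q - 1) ≤ m := by omega
    have hpq2 : p + q ≤ p * q := Nat.add_le_mul hp hq2
    have hfr : p * q - p - q < m := by
      obtain ⟨p', rfl⟩ : ∃ p', p = p' + 1 := ⟨p - 1, by omega⟩
      obtain ⟨q', rfl⟩ : ∃ q', q = q' + 1 := ⟨q - 1, by omega⟩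
      have e1 : (p'+1) * (q'+1) = p'*q' + p' + q' + 1 := by ring
      have e2 : (p'+1-1) * (q'+1-1) = p'*q' := by simp
      omega
    have hclos : m ∈ AddSubmonoid.closure ({p, q} : Set ℕ) := by
      by_contra hc
      exact absurd ((frobeniusNumber_pair hpq hp hq2).2 hc) (by omega)
    rw [AddSubmonoid.mem_closure_pair] at hclos
    obtain ⟨a, b, hab⟩ := hclos
    refine ⟨2 * g + a, hup _ (by omega), b, ?_⟩
    simp only [smul_eq_mul] at hab
    have e2 : p * (2*g+a) + q*b = 2*p*g + (a*p + b*q) := by ring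
    rw [e2, hab]
    omega

private lemma climb' (Phi : ℤ → ℝ) (p : ℕ) (hp : 0 < p) (A : ℤ)
    (step : ∀ m : ℤ, 0 ≤ m → m + p ≤ A → Phi (m + p) ≤ Phi m) :
    ∀ k : ℕ, ∀ m : ℤ, 0 ≤ m → m ≤ A → (A - m).toNat ≤ k →
      ∃ m', A - p < m' ∧ m' ≤ A ∧ Phi m' ≤ Phi m := by
  intro k
  induction k with
  | zero =>
    intro m hm0 hmA hk
    exact ⟨m, by omega, hmA, le_rfl⟩
  | succ k ih =>
    intro m hm0 hmA hk
    by_cases hc : A - p < m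
    · exact ⟨m, hc, hmA, le_rfl⟩
    · push_neg at hc
      obtain ⟨m', h1, h2, h3⟩ := ih (m + p) (by omega) (by omega) (by omega)
      exact ⟨m', h1, h2, h3.trans (step m hm0 (by omega))⟩

private lemma descend' (Phi : ℤ → ℝ) (p : ℕ) (hp : 0 < p) (A B : ℤ) (hAB : A ≤ B)
    (step : ∀ m : ℤ, B < m → Phi (m - p) ≤ Phi m) :
    ∀ k : ℕ, ∀ m : ℤ, A - p < m → (m - B).toNat ≤ k →
      ∃ m', A - p < m' ∧ m' ≤ B ∧ Phi m' ≤ Phi m := by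
  intro k
  induction k with
  | zero =>
    intro m hm hk
    exact ⟨m, hm, by omega, le_rfl⟩
  | succ k ih =>
    intro m hm hk
    by_cases hc : m ≤ B
    · exact ⟨m, hm, hc, le_rfl⟩
    · push_neg at hc
      obtain ⟨m', h1, h2, h3⟩ := ih (m - p) (by omega) (by omega)
      exact ⟨m', h1, h2, h3.trans (step m hc)⟩

/-- Localization of the minimum of `Φ(t,m)` for the formal semigroup of an
L-space cable knot `K_{p,q}` with `2gp ≤ q`, to the window `(iq-p, iq+2gp]`. -/
theorem stmt7 (p q g : ℕ) (hp : 2 ≤ p) (hq : 0 < q) (hpq : Nat.Coprime p q)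
    (hgq : 2 * g * p ≤ q)
    (SK : Set ℕ) (h0 : 0 ∈ SK) (hup : ∀ m, 2 * g ≤ m → m ∈ SK)
    (hcard : (SK ∩ Set.Iio (2 * g)).ncard = g)
    (S : Set ℕ) (hS : S = {n : ℕ | ∃ a ∈ SK, ∃ b : ℕ, n = p * a + q * b})
    (phi : ℤ → ℤ) (hphi : ∀ m : ℤ, phi m = ((S ∩ Set.Iio m.toNat).ncard : ℤ))
    (Phi : ℝ → ℤ → ℝ) (hPhi : ∀ t m, Phi t m = (phi m : ℝ) - t * m / 2)
    (i : ℕ) (hi : i < p) (t : ℝ)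
    (ht1 : 2 * i / (p : ℝ) ≤ t) (ht2 : t ≤ 2 * (i + 1) / (p : ℝ)) :
    sInf (Phi t '' {m : ℤ | 0 ≤ m ∧ m ≤ 2 * (p : ℤ) * g + ((p : ℤ) - 1) * ((q : ℤ) - 1)}) =
    sInf (Phi t '' {m : ℤ | (i : ℤ) * q - p < m ∧ m ≤ (i : ℤ) * q + 2 * g * p}) := by
  classical
  -- real bounds on t
  have hpR : (0:ℝ) < (p:ℝ) := by exact_mod_cast (by omega : 0 < p)
  have htp1 : 2 * (i:ℝ) ≤ t * p := by
    rw [div_le_iff₀ hpR] at ht1; linarith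
  have htp2 : t * p ≤ 2 * ((i:ℝ) + 1) := by
    rw [le_div_iff₀ hpR] at ht2; linarith
  have ht0 : 0 ≤ t := le_trans (by positivity) ht1
  have ht2' : t ≤ 2 := by
    have hip : (i:ℝ) + 1 ≤ p := by exact_mod_cast (show i + 1 ≤ p by omega)
    calc t ≤ 2*((i:ℝ)+1)/p := ht2
      _ ≤ 2 := by rw [div_le_iff₀ hpR]; linarith
  -- counting function
  set c : ℕ → ℕ := fun k => ((Finset.range k).filter (· ∈ S)).card with hc
  have hphic : ∀ m : ℤ, phi m = (c m.toNat : ℤ) := by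
    intro m
    rw [hphi]
    congr 1
    have hst : S ∩ Set.Iio (m.toNat : ℕ) = ↑((Finset.range m.toNat).filter (· ∈ S)) := by
      ext n; simp [Set.mem_Iio, and_comm]
    rw [hst, Set.ncard_coe_finset]
  have hdiff : ∀ u v : ℕ, u ≤ v → c v = c u + ((Finset.Ico u v).filter (· ∈ S)).card := by
    intro u v huv
    simp only [hc, Finset.range_eq_Ico]
    rw [← Finset.Ico_union_Ico_eq_Ico (Nat.zero_le u) huv, Finset.filter_union,
      Finset.card_union_of_disjoint
        (Finset.disjoint_filter_filter (Finset.Ico_disjoint_Ico_consecutive 0 u v))]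
  have hPhidiff : ∀ m : ℤ, 0 ≤ m → ∀ k : ℕ, Phi t (m + k) - Phi t m
      = ((((Finset.Ico m.toNat (m.toNat + k)).filter (· ∈ S)).card : ℝ)) - t * k / 2 := by
    intro m hm k
    rw [hPhi, hPhi, hphic, hphic]
    have h1 : (m + k).toNat = m.toNat + k := by omega
    rw [h1, hdiff m.toNat (m.toNat + k) (by omega)]
    push_cast
    ring
  -- step lemmas
  have stepUp : ∀ m : ℤ, 0 ≤ m → m + p ≤ (i:ℤ) * q → Phi t (m + p) ≤ Phi t m := by
    intro m hm hmq
    have hmq' : m.toNat + p ≤ i * q := by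
      have h2 : ((m.toNat : ℤ)) = m := Int.toNat_of_nonneg hm
      have h3 : ((m.toNat + p : ℕ) : ℤ) ≤ ((i*q : ℕ) : ℤ) := by push_cast; rw [h2]; exact hmq
      exact_mod_cast h3
    have hD := countA' p q i hp hq hpq S
      (fun n hn => by rw [hS] at hn; obtain ⟨a, _, b, hab⟩ := hn; exact ⟨a, b, hab⟩)
      m.toNat hmq'
    have hd := hPhidiff m hm p
    have hle : ((((Finset.Ico m.toNat (m.toNat + p)).filter (· ∈ S)).card : ℝ)) ≤ i := by
      exact_mod_cast hD
    linarith
  have stepDown : ∀ m : ℤ, (i:ℤ)*q + 2*g*p < m → Phi t (m - p) ≤ Phi t m := by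
    intro m hm
    have hD := countB' p q g i hp hpq hi S
      (fun a ha b => by rw [hS]; exact ⟨a, hup a ha, b, rfl⟩) m hm
    have hmpos : (0:ℤ) < m := by
      have : (0:ℤ) ≤ (i:ℤ)*q + 2*g*p := by positivity
      omega
    have huv : (m - p).toNat ≤ m.toNat := by omega
    rw [hPhi, hPhi, hphic, hphic, hdiff _ _ huv]
    have hge : ((i:ℝ)+1) ≤ (((Finset.Ico (m-p).toNat m.toNat).filter (· ∈ S)).card : ℝ) := by
      exact_mod_cast hD
    push_cast
    linarith
  -- the genus bound
  have hNcast : ((2*p*g + (p-1)*(q-1) : ℕ) : ℤ) = 2*(p:ℤ)*g + ((p:ℤ)-1)*((q:ℤ)-1) := by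
    have h1 : (1:ℕ) ≤ p := by omega
    have h2 : (1:ℕ) ≤ q := by omega
    push_cast [h1, h2]
    ring
  set Nn : ℕ := 2*p*g + (p-1)*(q-1) with hNn
  have tail : ∀ m : ℤ, (Nn:ℤ) ≤ m → Phi t (Nn:ℤ) ≤ Phi t m := by
    intro m hm
    have h0 : (0:ℤ) ≤ (Nn:ℤ) := by positivity
    set k := (m - Nn).toNat with hk
    have hmk : m = (Nn:ℤ) + (k:ℤ) := by omega
    have hd := hPhidiff (Nn:ℤ) h0 k
    have hfull : ((Finset.Ico ((Nn:ℤ)).toNat (((Nn:ℤ)).toNat + k)).filter (· ∈ S))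
        = Finset.Ico Nn (Nn + k) := by
      rw [Int.toNat_natCast]
      apply Finset.filter_true_of_mem
      intro n hn
      rw [Finset.mem_Ico] at hn
      exact frob' p q g hp hq hpq SK hup S hS n hn.1
    rw [hfull, Nat.card_Ico, Nat.add_sub_cancel_left] at hd
    have hkk : (0:ℝ) ≤ (k:ℝ) := by positivity
    rw [hmk]
    nlinarith
  have hPhi0 : ∀ m : ℤ, m ≤ 0 → Phi t 0 ≤ Phi t m := by
    intro m hm
    rw [hPhi, hPhi, hphic, hphic]
    have h1 : m.toNat = 0 := by omega
    have h2 : (0:ℤ).toNat = 0 := rfl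
    rw [h1, h2]
    have h3 : (m:ℝ) ≤ 0 := by exact_mod_cast hm
    push_cast
    nlinarith
  -- sets
  set P : Set ℤ := {m : ℤ | 0 ≤ m ∧ m ≤ 2 * (p : ℤ) * g + ((p : ℤ) - 1) * ((q : ℤ) - 1)} with hP
  set W : Set ℤ := {m : ℤ | (i : ℤ) * q - p < m ∧ m ≤ (i : ℤ) * q + 2 * g * p} with hW
  have hNmem : (Nn:ℤ) ∈ P := ⟨by positivity, le_of_eq hNcast⟩
  have h0mem : (0:ℤ) ∈ P := ⟨le_refl 0, by rw [← hNcast]; positivity⟩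
  have hpZ : (0:ℤ) < p := by exact_mod_cast (show 0 < p by omega)
  have hgpZ : (0:ℤ) ≤ 2*(g:ℤ)*p := by positivity
  have hWmem : ((i:ℤ)*q) ∈ W := ⟨by linarith, by linarith⟩
  have hPfin : P.Finite := Set.Finite.subset (Set.finite_Icc 0 (2*(p:ℤ)*g + ((p:ℤ)-1)*((q:ℤ)-1)))
    (fun x hx => hx)
  have hWfin : W.Finite := Set.Finite.subset
    (Set.finite_Ioc ((i:ℤ)*q - p) ((i:ℤ)*q + 2*g*p)) (fun x hx => hx)
  have hAne : (Phi t '' P).Nonempty := ⟨Phi t 0, ⟨0, h0mem, rfl⟩⟩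
  have hBne : (Phi t '' W).Nonempty := ⟨_, ⟨(i:ℤ)*q, hWmem, rfl⟩⟩
  have hAbdd : BddBelow (Phi t '' P) := (hPfin.image _).bddBelow
  have hBbdd : BddBelow (Phi t '' W) := (hWfin.image _).bddBelow
  apply le_antisymm
  · apply le_csInf hBne
    rintro b ⟨m, hmW, rfl⟩
    obtain ⟨hm1, hm2⟩ := hmW
    rcases lt_or_ge m 0 with hneg | h0m
    · exact (csInf_le hAbdd ⟨0, h0mem, rfl⟩).trans (hPhi0 m hneg.le)
    · rcases le_or_gt m ((Nn:ℤ)) with hle | hgt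
      · exact csInf_le hAbdd ⟨m, ⟨h0m, hNcast ▸ hle⟩, rfl⟩
      · exact (csInf_le hAbdd ⟨(Nn:ℤ), hNmem, rfl⟩).trans (tail m hgt.le)
  · apply le_csInf hAne
    rintro a ⟨m, hmP, rfl⟩
    obtain ⟨hm0, hmN⟩ := hmP
    rcases le_or_gt m ((i:ℤ)*q) with hle | hgt
    · obtain ⟨m', h1, h2, h3⟩ := climb' (Phi t) p (by omega) ((i:ℤ)*q) stepUp
        ((i:ℤ)*q - m).toNat m hm0 hle le_rfl
      exact (csInf_le hBbdd ⟨m', ⟨h1, by linarith⟩, rfl⟩).trans h3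
    · obtain ⟨m', h1, h2, h3⟩ := descend' (Phi t) p (by omega) ((i:ℤ)*q) ((i:ℤ)*q + 2*g*p)
        (by linarith) stepDown (m - ((i:ℤ)*q + 2*g*p)).toNat m (by linarith) le_rfl
      exact (csInf_le hBbdd ⟨m', ⟨h1, h2⟩, rfl⟩).trans h3
end

section
/- Let p >= 2 and q be coprime positive integers with q >= p. Define the numerical semigroup S = { a*p + b*q : a, b in Z_{>=0} }, phi(m) = #(S intersect [0,m)), and Phi(t,m) = phi(m) - t*m/2. Fix an integer i with 0 <= i < p and real t with 2i/p <= t <= 2(i+1)/p. Then the minimum of Phi(t, m) over integers m in [0, (p-1)(q-1)] equals the minimum of Phi(t, m) over integers m with iq - p < m <= iq. -/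
private lemma tk_exists_c {p q : ℕ} (hp : 2 ≤ p) (hpq : Nat.Coprime p q) (n : ℕ) :
    ∃ c : ℕ, c < p ∧ Nat.ModEq p (c * q) n ∧ ∀ a b : ℕ, n = a * p + b * q → c ≤ b := by
  haveI : NeZero p := ⟨by omega⟩
  have hq1 : (q : ZMod p) * (q : ZMod p)⁻¹ = 1 := ZMod.coe_mul_inv_eq_one q hpq.symm
  refine ⟨((n : ZMod p) * (q : ZMod p)⁻¹).val, ZMod.val_lt _, ?_, ?_⟩
  · rw [← ZMod.natCast_eq_natCast_iff]
    push_cast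
    rw [ZMod.natCast_val, ZMod.cast_id, mul_assoc, mul_comm ((q:ZMod p))⁻¹, hq1, mul_one]
  · rintro a b rfl
    have h1 : (((a * p + b * q : ℕ) : ZMod p) * (q : ZMod p)⁻¹) = (b : ZMod p) := by
      push_cast
      rw [ZMod.natCast_self]
      ring_nf
      rw [mul_assoc, hq1, mul_one]
    rw [h1]
    calc (b : ZMod p).val = b % p := ZMod.val_natCast p b
    _ ≤ b := Nat.mod_le b p

private lemma tk_mem_S {p q : ℕ} (hp : 2 ≤ p) (hq : p ≤ q) (hpq : Nat.Coprime p q) {n : ℕ}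
    (hn : (p - 1) * (q - 1) ≤ n) : ∃ a b : ℕ, n = a * p + b * q := by
  obtain ⟨c, hcp, hmod, -⟩ := tk_exists_c hp hpq n
  have hcq : c * q ≤ n := by
    by_contra hlt
    push_neg at hlt
    have hdvd : p ∣ c * q - n := (Nat.modEq_iff_dvd' hlt.le).mp hmod.symm
    have hge : p ≤ c * q - n := Nat.le_of_dvd (by omega) hdvd
    have h1 : c * q ≤ (p - 1) * q := Nat.mul_le_mul_right q (by omega)
    have h2 : (p - 1) * q = (p - 1) * (q - 1) + (p - 1) := by
      have : q - 1 + 1 = q := by omega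
      calc (p - 1) * q = (p - 1) * ((q - 1) + 1) := by rw [this]
      _ = (p - 1) * (q - 1) + (p - 1) := by ring
    omega
  have hdvd : p ∣ n - c * q := (Nat.modEq_iff_dvd' hcq).mp hmod
  exact ⟨(n - c * q) / p, c, by rw [Nat.div_mul_cancel hdvd]; omega⟩

private lemma tk_c1 {p q : ℕ} (hp : 2 ≤ p) (hpq : Nat.Coprime p q) (i m : ℕ)
    (h : m + p ≤ i * q) :
    ({n : ℕ | ∃ a b : ℕ, n = a * p + b * q} ∩ Set.Ico m (m + p)).ncard ≤ i := by
  classical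
  choose f hf1 hf2 hf3 using fun n => tk_exists_c hp hpq n
  have hcard : (Set.Iio i).ncard = i := by
    rw [← Finset.coe_Iio, Set.ncard_coe_finset, Nat.card_Iio]
  rw [← hcard]
  apply Set.ncard_le_ncard_of_injOn f
  · rintro n ⟨⟨a, b, rfl⟩, hm1, hm2⟩
    have h1 : f (a * p + b * q) * q ≤ b * q := Nat.mul_le_mul_right q (hf3 _ a b rfl)
    have h2 : b * q ≤ a * p + b * q := by omega
    have h3 : f (a * p + b * q) * q < i * q := by omega
    exact lt_of_mul_lt_mul_right h3 (Nat.zero_le q)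
  · intro n₁ h₁ n₂ h₂ hfe
    have hmod : Nat.ModEq p n₁ n₂ := by
      have := (hf2 n₁).symm.trans (hfe ▸ hf2 n₂)
      exact this
    obtain ⟨-, hm1, hm2⟩ := h₁
    obtain ⟨-, hm3, hm4⟩ := h₂
    rcases le_total n₁ n₂ with hle | hle
    · have hdvd : p ∣ n₂ - n₁ := (Nat.modEq_iff_dvd' hle).mp hmod
      rcases Nat.eq_zero_or_pos (n₂ - n₁) with h0 | h0
      · omega
      · have := Nat.le_of_dvd h0 hdvd; omega
    · have hdvd : p ∣ n₁ - n₂ := (Nat.modEq_iff_dvd' hle).mp hmod.symm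
      rcases Nat.eq_zero_or_pos (n₁ - n₂) with h0 | h0
      · omega
      · have := Nat.le_of_dvd h0 hdvd; omega


private lemma tk_c2 {p q : ℕ} (hp : 2 ≤ p) (hpq : Nat.Coprime p q) (i m : ℕ)
    (hi : i < p) (h : i * q < m + p) :
    i + 1 ≤ ({n : ℕ | ∃ a b : ℕ, n = a * p + b * q} ∩ Set.Ico m (m + p)).ncard := by
  classical
  have hcard : (Set.Iio (i + 1)).ncard = i + 1 := by
    rw [← Finset.coe_Iio, Set.ncard_coe_finset, Nat.card_Iio]
  rw [← hcard]
  set g : ℕ → ℕ := fun b => b * q + p * ((m + p - 1 - b * q) / p) with hg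
  have hbq : ∀ b : ℕ, b < i + 1 → b * q ≤ m + p - 1 := by
    intro b hb
    have : b * q ≤ i * q := Nat.mul_le_mul_right q (by omega)
    omega
  have hmem : ∀ b : ℕ, b < i + 1 → g b ∈
      {n : ℕ | ∃ a b : ℕ, n = a * p + b * q} ∩ Set.Ico m (m + p) := by
    intro b hb
    have hb1 := hbq b hb
    refine ⟨⟨(m + p - 1 - b * q) / p, b, by ring⟩, ?_, ?_⟩
    · have hdm : p * ((m + p - 1 - b * q) / p) + (m + p - 1 - b * q) % p
          = m + p - 1 - b * q := Nat.div_add_mod _ p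
      have hmlt : (m + p - 1 - b * q) % p < p := Nat.mod_lt _ (by omega)
      simp only [hg]
      omega
    · have hdm : p * ((m + p - 1 - b * q) / p) + (m + p - 1 - b * q) % p
          = m + p - 1 - b * q := Nat.div_add_mod _ p
      simp only [hg]
      omega
  have hmodg : ∀ b : ℕ, Nat.ModEq p (g b) (b * q) := by
    intro b
    simp only [hg]
    exact (Nat.modEq_iff_dvd' (by omega)).mpr ⟨(m + p - 1 - b * q) / p, by omega⟩ |>.symm
  apply Set.ncard_le_ncard_of_injOn g (fun b hb => hmem b hb)
  intro b₁ h₁ b₂ h₂ hfe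
  have heq : Nat.ModEq p (b₁ * q) (b₂ * q) :=
    ((hmodg b₁).symm.trans (hfe ▸ hmodg b₂))
  have h1 : b₁ % p = b₂ % p := Nat.ModEq.cancel_right_of_coprime hpq heq
  have hb1 : b₁ < i + 1 := h₁
  have hb2 : b₂ < i + 1 := h₂
  rw [Nat.mod_eq_of_lt (by omega), Nat.mod_eq_of_lt (by omega)] at h1
  exact h1

/-- Localization of the minimum of `Φ_{T_{p,q}}(t,m)` to the window `(iq-p, iq]`. -/
theorem stmt8 (p q : ℕ) (hp : 2 ≤ p) (hq : p ≤ q) (hpq : Nat.Coprime p q)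
    (S : Set ℕ) (hS : S = {n : ℕ | ∃ a b : ℕ, n = a * p + b * q})
    (phi : ℤ → ℤ) (hphi : ∀ m : ℤ, phi m = ((S ∩ Set.Iio m.toNat).ncard : ℤ))
    (Phi : ℝ → ℤ → ℝ) (hPhi : ∀ t m, Phi t m = (phi m : ℝ) - t * m / 2)
    (i : ℕ) (hi : i < p) (t : ℝ)
    (ht1 : 2 * i / (p : ℝ) ≤ t) (ht2 : t ≤ 2 * (i + 1) / (p : ℝ)) :
    sInf (Phi t '' {m : ℤ | 0 ≤ m ∧ m ≤ ((p : ℤ) - 1) * ((q : ℤ) - 1)}) =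
    sInf (Phi t '' {m : ℤ | (i : ℤ) * q - p < m ∧ m ≤ (i : ℤ) * q}) := by
  subst hS
  have hq2 : 2 ≤ q := le_trans hp hq
  have hp0 : (0:ℝ) < p := by exact_mod_cast (by omega : 0 < p)
  have ht0 : 0 ≤ t := le_trans (by positivity) ht1
  have htp1 : 2 * (i:ℝ) ≤ t * p := by
    rw [div_le_iff₀ hp0] at ht1; linarith
  have htp2 : t * p ≤ 2 * ((i:ℝ) + 1) := by
    rw [le_div_iff₀ hp0] at ht2; linarith
  have hip : (i:ℝ) + 1 ≤ (p:ℝ) := by exact_mod_cast (by omega : i + 1 ≤ p)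
  have ht2' : t ≤ 2 := by nlinarith
  have Sfin : ∀ k : ℕ, ({n : ℕ | ∃ a b : ℕ, n = a * p + b * q} ∩ Set.Iio k).Finite :=
    fun k => Set.Finite.inter_of_right (Set.finite_Iio k) _
  have phi_neg : ∀ m : ℤ, m ≤ 0 → phi m = 0 := by
    intro m hm
    rw [hphi]
    have h1 : m.toNat = 0 := by omega
    rw [h1]
    have h2 : Set.Iio (0:ℕ) = ∅ := by ext x; simp
    rw [h2]
    simp
  have phi_add : ∀ m : ℤ, 0 ≤ m → phi (m + p) = phi m +
      (({n : ℕ | ∃ a b : ℕ, n = a * p + b * q} ∩ Set.Ico m.toNat (m.toNat + p)).ncard : ℤ) := by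
    intro m hm
    rw [hphi, hphi]
    have h1 : (m + (p:ℤ)).toNat = m.toNat + p := by omega
    rw [h1]
    rw [← Set.Iio_union_Ico_eq_Iio (Nat.le_add_right m.toNat p)]
    rw [Set.inter_union_distrib_left]
    rw [Set.ncard_union_eq ?_ (Sfin _)
      (Set.Finite.inter_of_right (Set.finite_Ico _ _) _)]
    · push_cast; ring
    · rw [Set.disjoint_left]
      rintro x ⟨-, hx1⟩ ⟨-, hx2, -⟩
      simp only [Set.mem_Iio] at hx1
      omega
  have phi_succ : ∀ m : ℤ, 0 ≤ m → (∃ a b : ℕ, m.toNat = a * p + b * q) →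
      phi (m + 1) = phi m + 1 := by
    intro m hm hmem
    rw [hphi, hphi]
    have h1 : (m + 1).toNat = m.toNat + 1 := by omega
    rw [h1]
    have h2 : Set.Iio (m.toNat + 1) = insert m.toNat (Set.Iio m.toNat) := by
      ext x; simp only [Set.mem_Iio, Set.mem_insert_iff]; omega
    have h3 : {n : ℕ | ∃ a b : ℕ, n = a * p + b * q} ∩ insert m.toNat (Set.Iio m.toNat)
        = insert m.toNat ({n : ℕ | ∃ a b : ℕ, n = a * p + b * q} ∩ Set.Iio m.toNat) :=
      Set.inter_insert_of_mem hmem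
    rw [h2, h3]
    rw [Set.ncard_insert_of_notMem (by simp) (Sfin _)]
    push_cast; ring
  have stepup : ∀ m : ℤ, 0 ≤ m → m + p ≤ (i:ℤ) * q → Phi t (m + p) ≤ Phi t m := by
    intro m hm hmq
    have hnat : m.toNat + p ≤ i * q := by
      have : ((m.toNat + p : ℕ) : ℤ) ≤ ((i * q : ℕ) : ℤ) := by push_cast; omega
      exact_mod_cast this
    have hc := tk_c1 hp hpq i m.toNat hnat
    rw [hPhi, hPhi, phi_add m hm]
    have hc' : (({n : ℕ | ∃ a b : ℕ, n = a * p + b * q} ∩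
        Set.Ico m.toNat (m.toNat + p)).ncard : ℝ) ≤ (i:ℝ) := by exact_mod_cast hc
    push_cast
    linarith
  have stepdown : ∀ m : ℤ, (i:ℤ) * q - p < m → Phi t m ≤ Phi t (m + p) := by
    intro m hm
    have key : ((i:ℤ) + 1) ≤ phi (m + p) - phi m := by
      by_cases hm0 : 0 ≤ m
      · rw [phi_add m hm0]
        have hnat : i * q < m.toNat + p := by
          have : ((i * q : ℕ) : ℤ) < ((m.toNat + p : ℕ) : ℤ) := by push_cast; omega
          exact_mod_cast this
        have hc := tk_c2 hp hpq i m.toNat hi hnat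
        have : ((i + 1 : ℕ) : ℤ) ≤ (({n : ℕ | ∃ a b : ℕ, n = a * p + b * q} ∩
            Set.Ico m.toNat (m.toNat + p)).ncard : ℤ) := by exact_mod_cast hc
        push_cast at this ⊢
        omega
      · have hi0 : i = 0 := by
          by_contra h0
          have h1 : (1:ℤ) ≤ (i:ℤ) := by exact_mod_cast (by omega : 1 ≤ i)
          have h2 : (q:ℤ) ≤ (i:ℤ) * q := le_mul_of_one_le_left (by positivity) h1
          have h3 : (p:ℤ) ≤ (q:ℤ) := by exact_mod_cast hq
          omega
        subst hi0
        simp only [Nat.cast_zero, zero_mul, zero_sub] at hm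
        rw [phi_neg m (by omega), hphi]
        have h0mem : (0:ℕ) ∈ {n : ℕ | ∃ a b : ℕ, n = a * p + b * q} ∩
            Set.Iio (m + (p:ℤ)).toNat := by
          refine ⟨⟨0, 0, by ring⟩, ?_⟩
          simp only [Set.mem_Iio]
          omega
        have hpos := (Set.ncard_pos (Sfin _)).mpr ⟨0, h0mem⟩
        push_cast
        omega
    rw [hPhi, hPhi]
    have key' : ((i:ℝ) + 1) ≤ (phi (m + p) : ℝ) - (phi m : ℝ) := by exact_mod_cast key
    push_cast
    linarith
  -- window and main interval
  set gl : ℤ := ((p:ℤ) - 1) * ((q:ℤ) - 1) with hgl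
  have hglcast : (((p - 1) * (q - 1) : ℕ) : ℤ) = gl := by
    rw [hgl, Nat.cast_mul, Nat.cast_sub (by omega : 1 ≤ p), Nat.cast_sub (by omega : 1 ≤ q),
      Nat.cast_one]
  have hgl0 : 0 ≤ gl := by rw [← hglcast]; positivity
  have claim3 : ∀ N : ℕ, ∀ m : ℤ, gl ≤ m → (m - gl).toNat ≤ N → Phi t gl ≤ Phi t m := by
    intro N
    induction N with
    | zero =>
      intro m h1 h2
      have : m = gl := by omega
      rw [this]
    | succ n ih =>
      intro m h1 h2
      rcases eq_or_lt_of_le h1 with he | hlt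
      · rw [← he]
      · have hm1 : gl ≤ m - 1 := by omega
        have hstep : Phi t (m - 1) ≤ Phi t m := by
          have hmem : ∃ a b : ℕ, (m - 1).toNat = a * p + b * q := by
            apply tk_mem_S hp hq hpq
            omega
          have hps := phi_succ (m - 1) (by omega) hmem
          rw [hPhi, hPhi]
          have h5 : phi m = phi (m - 1) + 1 := by
            rw [← hps]; ring_nf
          rw [h5]
          push_cast
          linarith
        exact le_trans (ih (m - 1) hm1 (by omega)) hstep
  have claim1 : ∀ N : ℕ, ∀ m : ℤ, 0 ≤ m → m ≤ (i:ℤ) * q → ((i:ℤ) * q - m).toNat ≤ N →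
      ∃ m', ((i:ℤ) * q - p < m' ∧ m' ≤ (i:ℤ) * q) ∧ Phi t m' ≤ Phi t m := by
    intro N
    induction N with
    | zero =>
      intro m h0 h1 h2
      exact ⟨m, ⟨by omega, h1⟩, le_refl _⟩
    | succ n ih =>
      intro m h0 h1 h2
      by_cases hc : (i:ℤ) * q - p < m
      · exact ⟨m, ⟨hc, h1⟩, le_refl _⟩
      · push_neg at hc
        have hle : m + p ≤ (i:ℤ) * q := by omega
        obtain ⟨m', hm', hle'⟩ := ih (m + p) (by omega) hle (by omega)
        exact ⟨m', hm', le_trans hle' (stepup m h0 hle)⟩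
  have claim2 : ∀ N : ℕ, ∀ m : ℤ, (i:ℤ) * q < m → (m - (i:ℤ) * q).toNat ≤ N →
      ∃ m', ((i:ℤ) * q - p < m' ∧ m' ≤ (i:ℤ) * q) ∧ Phi t m' ≤ Phi t m := by
    intro N
    induction N with
    | zero => intro m h1 h2; omega
    | succ n ih =>
      intro m h1 h2
      have hstep : Phi t (m - p) ≤ Phi t m := by
        have := stepdown (m - p) (by omega)
        have he : m - (p:ℤ) + p = m := by ring
        rwa [he] at this
      by_cases hc : m - p ≤ (i:ℤ) * q
      · exact ⟨m - p, ⟨by omega, hc⟩, hstep⟩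
      · push_neg at hc
        obtain ⟨m', hm', hle'⟩ := ih (m - p) hc (by omega)
        exact ⟨m', hm', le_trans hle' hstep⟩
  have Phi_zero : Phi t 0 = 0 := by
    rw [hPhi, phi_neg 0 (le_refl _)]
    push_cast
    ring
  have keyBA : ∀ m : ℤ, ((i:ℤ) * q - p < m ∧ m ≤ (i:ℤ) * q) →
      ∃ m', (0 ≤ m' ∧ m' ≤ gl) ∧ Phi t m' ≤ Phi t m := by
    rintro m ⟨h1, h2⟩
    by_cases hm0 : m < 0
    · refine ⟨0, ⟨le_refl _, hgl0⟩, ?_⟩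
      rw [Phi_zero, hPhi, phi_neg m (by omega)]
      have hmr : ((m:ℤ):ℝ) ≤ 0 := by exact_mod_cast hm0.le
      push_cast
      nlinarith
    · push_neg at hm0
      by_cases hmg : m ≤ gl
      · exact ⟨m, ⟨hm0, hmg⟩, le_refl _⟩
      · push_neg at hmg
        exact ⟨gl, ⟨hgl0, le_refl _⟩, claim3 (m - gl).toNat m hmg.le (le_refl _)⟩
  have keyAB : ∀ m : ℤ, (0 ≤ m ∧ m ≤ gl) →
      ∃ m', ((i:ℤ) * q - p < m' ∧ m' ≤ (i:ℤ) * q) ∧ Phi t m' ≤ Phi t m := by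
    rintro m ⟨h1, h2⟩
    by_cases hc : m ≤ (i:ℤ) * q
    · exact claim1 ((i:ℤ) * q - m).toNat m h1 hc (le_refl _)
    · push_neg at hc
      exact claim2 (m - (i:ℤ) * q).toNat m hc (le_refl _)
  -- finiteness / nonemptiness
  have hAfin : ({m : ℤ | 0 ≤ m ∧ m ≤ gl}).Finite :=
    (Set.finite_Icc (0:ℤ) gl).subset (fun x hx => ⟨hx.1, hx.2⟩)
  have hBfin : ({m : ℤ | (i:ℤ) * q - p < m ∧ m ≤ (i:ℤ) * q}).Finite :=
    (Set.finite_Icc ((i:ℤ) * q - p + 1) ((i:ℤ) * q)).subset (fun x hx => Set.mem_Icc.mpr ⟨by have h1 := hx.1; omega, hx.2⟩)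
  have hAne : (Phi t '' {m : ℤ | 0 ≤ m ∧ m ≤ gl}).Nonempty :=
    ⟨Phi t 0, ⟨0, ⟨le_refl _, hgl0⟩, rfl⟩⟩
  have hBne : (Phi t '' {m : ℤ | (i:ℤ) * q - p < m ∧ m ≤ (i:ℤ) * q}).Nonempty :=
    ⟨Phi t ((i:ℤ) * q), ⟨(i:ℤ) * q, ⟨by omega, le_refl _⟩, rfl⟩⟩
  apply le_antisymm
  · refine le_csInf hBne ?_
    rintro y ⟨m, hm, rfl⟩
    obtain ⟨m', hm', hle⟩ := keyBA m hm
    exact le_trans (csInf_le ((hAfin.image _).bddBelow) ⟨m', hm', rfl⟩) hle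
  · refine le_csInf hAne ?_
    rintro y ⟨m, hm, rfl⟩
    obtain ⟨m', hm', hle⟩ := keyAB m hm
    exact le_trans (csInf_le ((hBfin.image _).bddBelow) ⟨m', hm', rfl⟩) hle
end

section
/- Let K be a knot with Alexander polynomial Delta_K of degree 2g (g = genus, K an L-space knot so that deg Delta_K = 2g), and let p, q be coprime positive integers with q >= p(2g-1). Then the genus of the cable knot K_{p,q} satisfies g(K_{p,q}) = p*g + (p-1)(q-1)/2. Purely combinatorially: if S_K is a subset of Z_{>=0} with 0 in S_K, Z_{>= 2g} subset of S_K, and #(Z_{>=0} \ S_K) = g with max(Z_{>=0} \ S_K) = 2g - 1, and if S := p*S_K + q*Z_{>=0} with q >= p(2g-1), then the complement of S in Z_{>=0} is finite with exactly p*g + (p-1)(q-1)/2 elements, and its maximum is 2(p*g + (p-1)(q-1)/2) - 1. -/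
open Finset

-- auxiliary: sum of floors ∑_{b<p} ⌊qb/p⌋ = (p-1)(q-1)/2 for coprime p,q
lemma aux_sum_div (p q u : ℕ) (hp : 2 ≤ p) (hq0 : 0 < q) (hu : q * u % p = 1) :
    ∑ b ∈ range p, q * b / p = (p - 1) * (q - 1) / 2 := by
  have hp0 : 0 < p := by omega
  -- ∑ (q*b % p) over range p = ∑ b over range p
  have hmodsum : ∑ b ∈ range p, q * b % p = ∑ b ∈ range p, b := by
    apply Finset.sum_nbij' (i := fun b => q * b % p) (j := fun c => u * c % p)
    · intro a _; exact Finset.mem_range.mpr (Nat.mod_lt _ hp0)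
    · intro a _; exact Finset.mem_range.mpr (Nat.mod_lt _ hp0)
    · intro a ha
      have ha' : a < p := Finset.mem_range.mp ha
      have h1 : u * (q * a % p) ≡ u * (q * a) [MOD p] :=
        Nat.ModEq.mul_left u (Nat.mod_modEq _ p)
      have h2 : q * u * a ≡ 1 * a [MOD p] := by
        refine Nat.ModEq.mul_right a ?_
        show q * u % p = 1 % p
        rw [hu, Nat.mod_eq_of_lt (by omega)]
      have h3 : u * (q * a % p) ≡ a [MOD p] := by
        calc u * (q * a % p) ≡ u * (q * a) [MOD p] := h1
          _ = q * u * a := by ring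
          _ ≡ 1 * a [MOD p] := h2
          _ = a := by ring
      have h4 : u * (q * a % p) % p = a % p := h3
      rwa [Nat.mod_eq_of_lt ha'] at h4
    · intro c hc
      have hc' : c < p := Finset.mem_range.mp hc
      have h1 : q * (u * c % p) ≡ q * (u * c) [MOD p] :=
        Nat.ModEq.mul_left q (Nat.mod_modEq _ p)
      have h2 : q * u * c ≡ 1 * c [MOD p] := by
        refine Nat.ModEq.mul_right c ?_
        show q * u % p = 1 % p
        rw [hu, Nat.mod_eq_of_lt (by omega)]
      have h3 : q * (u * c % p) ≡ c [MOD p] := by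
        calc q * (u * c % p) ≡ q * (u * c) [MOD p] := h1
          _ = q * u * c := by ring
          _ ≡ 1 * c [MOD p] := h2
          _ = c := by ring
      have h4 : q * (u * c % p) % p = c % p := h3
      rwa [Nat.mod_eq_of_lt hc'] at h4
    · intro a _; rfl
  -- p * X + S1 = q * S1 where S1 = ∑ b
  have hdm : ∀ b, q * b = p * (q * b / p) + q * b % p := fun b => (Nat.div_add_mod _ _).symm
  have hsum1 : ∑ b ∈ range p, q * b = p * (∑ b ∈ range p, q * b / p) + ∑ b ∈ range p, b := by
    rw [← hmodsum, Finset.mul_sum, ← Finset.sum_add_distrib]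
    exact Finset.sum_congr rfl (fun b _ => hdm b)
  have hqs : ∑ b ∈ range p, q * b = q * ∑ b ∈ range p, b := by
    rw [Finset.mul_sum]
  have hs1 : (∑ b ∈ range p, b) * 2 = p * (p - 1) := Finset.sum_range_id_mul_two p
  set X := ∑ b ∈ range p, q * b / p with hX
  set S1 := ∑ b ∈ range p, b with hS1
  -- 2 * p * X = p * (p-1) * (q-1)
  have h2 : 2 * (p * X) = p * ((p - 1) * (q - 1)) := by
    have h4 : p * X + S1 = q * S1 := by rw [← hsum1, hqs]
    have h5 : p * X = (q - 1) * S1 := by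
      have hq1 : 1 ≤ q := hq0
      have : (q - 1) * S1 + S1 = q * S1 := by
        have : (q - 1) * S1 + 1 * S1 = ((q-1) + 1) * S1 := (add_mul _ _ _).symm
        rw [one_mul] at this
        rw [this]
        congr 1
        omega
      omega
    calc 2 * (p * X) = (q - 1) * (S1 * 2) := by rw [h5]; ring
      _ = (q - 1) * (p * (p - 1)) := by rw [hs1]
      _ = p * ((p - 1) * (q - 1)) := by ring
  have h6 : 2 * X = (p - 1) * (q - 1) := by
    have := Nat.eq_of_mul_eq_mul_left hp0 (show p * (2 * X) = p * ((p-1)*(q-1)) by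
      rw [← h2]; ring)
    exact this
  omega

/-- Genus of the L-space cable: the gap count of `p·S_K + q·ℤ≥0` is
`pg + (p-1)(q-1)/2` and its Frobenius number is `2(pg + (p-1)(q-1)/2) - 1`. -/
theorem stmt9 (p q g : ℕ) (hp : 2 ≤ p) (hq : 0 < q) (hg : 1 ≤ g)
    (hpq : Nat.Coprime p q) (hgq : p * (2 * g - 1) ≤ q)
    (SK : Set ℕ) (h0 : 0 ∈ SK) (hup : ∀ m, 2 * g ≤ m → m ∈ SK)
    (hfin : (SKᶜ : Set ℕ).Finite) (hcard : (SKᶜ : Set ℕ).ncard = g)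
    (htop : 2 * g - 1 ∉ SK)
    (S : Set ℕ) (hS : S = {n : ℕ | ∃ a ∈ SK, ∃ b : ℕ, n = p * a + q * b}) :
    (Sᶜ : Set ℕ).Finite ∧
    (Sᶜ : Set ℕ).ncard = p * g + (p - 1) * (q - 1) / 2 ∧
    2 * (p * g + (p - 1) * (q - 1) / 2) - 1 ∉ S ∧
    ∀ m, 2 * (p * g + (p - 1) * (q - 1) / 2) ≤ m → m ∈ S := by
  have hp0 : 0 < p := by omega
  -- inverse of q mod p
  obtain ⟨u, hu⟩ : ∃ u, q * u % p = 1 :=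
    by obtain ⟨m, -, h⟩ := Nat.exists_mul_mod_eq_one_of_coprime hpq.symm (by omega); exact ⟨m, h⟩
  -- strict inequality p(2g-1) < q
  have hlt : p * (2 * g - 1) < q := by
    rcases lt_or_eq_of_le hgq with h | h
    · exact h
    · exfalso
      have hdvd : p ∣ q := ⟨2 * g - 1, h.symm⟩
      have h1 : p ∣ Nat.gcd p q := Nat.dvd_gcd dvd_rfl hdvd
      have h2 : p ∣ 1 := hpq ▸ h1
      have := Nat.le_of_dvd one_pos h2
      omega
  -- cancellation: q*b ≡ q*b' mod p, b b' < p ⇒ b = b'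
  have hcancel : ∀ b b', b < p → b' < p → q * b % p = q * b' % p → b = b' := by
    intro b b' hb hb' hbe
    have key : ∀ c, c < p → u * (q * c) % p = c := by
      intro c hc
      have h2 : q * u * c ≡ 1 * c [MOD p] := by
        refine Nat.ModEq.mul_right c ?_
        show q * u % p = 1 % p
        rw [hu, Nat.mod_eq_of_lt (by omega)]
      have h3 : u * (q * c) ≡ c [MOD p] := by
        calc u * (q * c) = q * u * c := by ring
          _ ≡ 1 * c [MOD p] := h2
          _ = c := by ring
      have h4 : u * (q * c) % p = c % p := h3
      rwa [Nat.mod_eq_of_lt hc] at h4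
    have e1 : u * (q * b) % p = u * (q * b') % p := Nat.ModEq.mul_left u hbe
    rw [key b hb, key b' hb'] at e1
    exact e1
  -- the finset of gaps of SK
  set G : Finset ℕ := hfin.toFinset with hGdef
  have hG : ∀ a, a ∈ G ↔ a ∉ SK := fun a => hfin.mem_toFinset
  have hGcard : G.card = g := by
    rw [← hcard]
    exact (Set.ncard_eq_toFinset_card _ hfin).symm
  have hGtop : 2 * g - 1 ∈ G := (hG _).mpr htop
  have hGle : ∀ a ∈ G, a ≤ 2 * g - 1 := by
    intro a ha
    by_contra h
    exact (hG a).mp ha (hup a (by omega))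
  -- the candidate gap sets per residue class
  set C : ℕ → Finset ℕ := fun b =>
    G.image (fun a => p * a + q * b) ∪ (Finset.Icc 1 (q * b / p)).image (fun k => q * b - p * k)
    with hCdef
  set T : Finset ℕ := (range p).biUnion C with hTdef
  set F : ℕ := p * (2 * g - 1) + q * (p - 1) with hFdef
  -- every element of C b is ≡ q*b mod p and ≤ F
  have hCmod : ∀ b, b < p → ∀ n ∈ C b, n % p = q * b % p := by
    intro b hb n hn
    rw [hCdef] at hn
    simp only [Finset.mem_union, Finset.mem_image, Finset.mem_Icc] at hn
    rcases hn with ⟨a, _, rfl⟩ | ⟨k, ⟨hk1, hk2⟩, rfl⟩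
    · have : p * a + q * b = q * b + a * p := by ring
      rw [this, Nat.add_mul_mod_self_right]
    · have hkle : p * k ≤ q * b := by
        rw [mul_comm p k]; exact (Nat.le_div_iff_mul_le hp0).mp hk2
      have heq : q * b - p * k + k * p = q * b := by
        rw [mul_comm k p]; omega
      conv_rhs => rw [← heq]
      rw [Nat.add_mul_mod_self_right]
  have hCle : ∀ b, b < p → ∀ n ∈ C b, n ≤ F := by
    intro b hb n hn
    rw [hCdef] at hn
    simp only [Finset.mem_union, Finset.mem_image, Finset.mem_Icc] at hn
    have hbq : q * b ≤ q * (p - 1) := Nat.mul_le_mul_left q (by omega)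
    rcases hn with ⟨a, ha, rfl⟩ | ⟨k, ⟨hk1, hk2⟩, rfl⟩
    · have h1 : p * a ≤ p * (2 * g - 1) := Nat.mul_le_mul_left p (hGle a ha)
      rw [hFdef]; omega
    · rw [hFdef]
      have h1 : q * b - p * k ≤ q * b := Nat.sub_le _ _
      omega
  -- elements of C b are not in S
  have hCnotS : ∀ b, b < p → ∀ n ∈ C b, n ∉ S := by
    intro b hb n hn hnS
    rw [hS] at hnS
    obtain ⟨a', ha', b', hrep⟩ := hnS
    -- b' < p
    have hnle : n ≤ F := hCle b hb n hn
    have hFlt : F < q * p := by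
      rw [hFdef]
      have : q * (p - 1) + q = q * p := by
        have : q * (p - 1) + q * 1 = q * ((p-1) + 1) := (Nat.mul_add q _ _).symm
        rw [Nat.mul_one] at this
        rw [this]
        congr 1
        omega
      omega
    have hb'lt : b' < p := by
      by_contra h
      have : q * p ≤ q * b' := Nat.mul_le_mul_left q (by omega)
      omega
    -- residues match
    have h1 : n % p = q * b' % p := by
      rw [hrep]
      have : p * a' + q * b' = q * b' + a' * p := by ring
      rw [this, Nat.add_mul_mod_self_right]
    have h2 : n % p = q * b % p := hCmod b hb n hn
    have hbb : b = b' := hcancel b b' hb hb'lt (by rw [← h2, h1])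
    subst hbb
    -- derive contradiction in each case
    rw [hCdef] at hn
    simp only [Finset.mem_union, Finset.mem_image, Finset.mem_Icc] at hn
    rcases hn with ⟨a, ha, hae⟩ | ⟨k, ⟨hk1, hk2⟩, hke⟩
    · -- p*a + q*b = p*a' + q*b ⇒ a = a' ∈ SK, but a ∉ SK
      have : p * a = p * a' := by omega
      have haa : a = a' := Nat.eq_of_mul_eq_mul_left hp0 this
      exact (hG a).mp ha (haa ▸ ha')
    · -- n < q*b but n = p*a' + q*b ≥ q*b
      have hkle : p * k ≤ q * b := by
        rw [mul_comm p k]; exact (Nat.le_div_iff_mul_le hp0).mp hk2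
      have hpk : 0 < p * k := Nat.mul_pos hp0 (by omega)
      omega
  -- Sᶜ = T
  have hTS : (Sᶜ : Set ℕ) = ↑T := by
    ext n
    simp only [Set.mem_compl_iff, Finset.coe_biUnion, Set.mem_iUnion, Finset.mem_coe,
      Finset.mem_range, hTdef]
    constructor
    · intro hnS
      -- find b
      set b := u * n % p with hbdef
      have hblt : b < p := Nat.mod_lt _ hp0
      have hbmod : q * b % p = n % p := by
        have h2 : q * u * n ≡ 1 * n [MOD p] := by
          refine Nat.ModEq.mul_right n ?_
          show q * u % p = 1 % p
          rw [hu, Nat.mod_eq_of_lt (by omega)]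
        have h3 : q * b ≡ n [MOD p] := by
          calc q * b = q * (u * n % p) := rfl
            _ ≡ q * (u * n) [MOD p] := Nat.ModEq.mul_left q (Nat.mod_modEq _ p)
            _ = q * u * n := by ring
            _ ≡ 1 * n [MOD p] := h2
            _ = n := by ring
        exact h3
      rcases le_or_gt (q * b) n with hle | hlt2
      · -- n = p*a + q*b, a must be a gap of SK
        have hdvd : p ∣ n - q * b := (Nat.modEq_iff_dvd' hle).mp hbmod
        obtain ⟨a, hae⟩ := hdvd
        have hrep : n = p * a + q * b := by omega
        have haG : a ∈ G := by
          rw [hG]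
          intro haSK
          exact hnS (by rw [hS]; exact ⟨a, haSK, b, hrep⟩)
        refine ⟨b, hblt, ?_⟩
        rw [hCdef]
        simp only [Finset.mem_union, Finset.mem_image]
        exact Or.inl ⟨a, haG, hrep.symm⟩
      · -- n < q*b : n = q*b - p*k
        have hdvd : p ∣ q * b - n := (Nat.modEq_iff_dvd' (le_of_lt hlt2)).mp hbmod.symm
        obtain ⟨k, hke⟩ := hdvd
        have hk1 : 1 ≤ k := by
          rcases Nat.eq_zero_or_pos k with h | h
          · subst h; omega
          · exact h
        have hk2 : k ≤ q * b / p := by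
          rw [Nat.le_div_iff_mul_le hp0, mul_comm]
          omega
        refine ⟨b, hblt, ?_⟩
        rw [hCdef]
        simp only [Finset.mem_union, Finset.mem_image, Finset.mem_Icc]
        exact Or.inr ⟨k, ⟨hk1, hk2⟩, by omega⟩
    · rintro ⟨b, hb, hn⟩
      exact hCnotS b hb n hn
  -- cardinality of C b
  have hCcard : ∀ b, b < p → (C b).card = g + q * b / p := by
    intro b hb
    rw [hCdef]
    have hdisj : Disjoint (G.image (fun a => p * a + q * b))
        ((Finset.Icc 1 (q * b / p)).image (fun k => q * b - p * k)) := by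
      rw [Finset.disjoint_left]
      rintro n hn1 hn2
      simp only [Finset.mem_image, Finset.mem_Icc] at hn1 hn2
      obtain ⟨a, _, rfl⟩ := hn1
      obtain ⟨k, ⟨hk1, hk2⟩, hke⟩ := hn2
      have hkle : p * k ≤ q * b := by
        rw [mul_comm p k]; exact (Nat.le_div_iff_mul_le hp0).mp hk2
      have hpk : 0 < p * k := Nat.mul_pos hp0 (by omega)
      omega
    rw [Finset.card_union_of_disjoint hdisj]
    congr 1
    · rw [Finset.card_image_of_injective _ (fun a a' h => by
        have : p * a = p * a' := by omega
        exact Nat.eq_of_mul_eq_mul_left hp0 this)]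
      exact hGcard
    · have hinj : Set.InjOn (fun k => q * b - p * k) ↑(Finset.Icc 1 (q * b / p)) := by
        intro k hk k' hk' he
        simp only [Finset.coe_Icc, Set.mem_Icc] at hk hk'
        simp only at he
        have h1 : p * k ≤ q * b := by
          rw [mul_comm p k]; exact (Nat.le_div_iff_mul_le hp0).mp hk.2
        have h2 : p * k' ≤ q * b := by
          rw [mul_comm p k']; exact (Nat.le_div_iff_mul_le hp0).mp hk'.2
        have h3 : p * k = p * k' := by omega
        exact Nat.eq_of_mul_eq_mul_left hp0 h3
      rw [Finset.card_image_of_injOn hinj, Nat.card_Icc, Nat.add_sub_cancel]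
  -- cardinality of T
  have hTcard : T.card = p * g + (p - 1) * (q - 1) / 2 := by
    rw [hTdef, Finset.card_biUnion]
    · have : ∑ b ∈ range p, (C b).card = ∑ b ∈ range p, (g + q * b / p) :=
        Finset.sum_congr rfl (fun b hb => hCcard b (Finset.mem_range.mp hb))
      rw [this, Finset.sum_add_distrib, Finset.sum_const, Finset.card_range, smul_eq_mul,
        aux_sum_div p q u hp hq hu]
    · intro b hb b' hb' hne
      rw [Function.onFun, Finset.disjoint_left]
      intro n hn hn'
      exact hne (hcancel b b' (Finset.mem_range.mp hb) (Finset.mem_range.mp hb')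
        (by rw [← hCmod b (Finset.mem_range.mp hb) n hn,
                hCmod b' (Finset.mem_range.mp hb') n hn']))
  -- evenness of (p-1)(q-1)
  have hEeven : 2 * ((p - 1) * (q - 1) / 2) = (p - 1) * (q - 1) := by
    have h2d : 2 ∣ (p - 1) * (q - 1) := by
      rcases Nat.even_or_odd p with he | ho
      · have hqodd : ¬ (2 ∣ q) := by
          intro h2q
          have h2p : 2 ∣ p := he.two_dvd
          have : 2 ∣ Nat.gcd p q := Nat.dvd_gcd h2p h2q
          rw [hpq] at this
          omega
        have : 2 ∣ q - 1 := by omega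
        exact Dvd.dvd.mul_left this _
      · have : 2 ∣ p - 1 := by
          have := ho
          rcases this with ⟨m, hm⟩
          omega
        exact Dvd.dvd.mul_right this _
    exact Nat.mul_div_cancel' h2d
  -- the key arithmetic identity : F + 1 = 2*N
  set N := p * g + (p - 1) * (q - 1) / 2 with hNdef
  have hFN : F + 1 = 2 * N := by
    rw [hFdef, hNdef, Nat.mul_add, hEeven]
    -- p*(2g-1) + q*(p-1) + 1 = 2*(p*g) + (p-1)*(q-1)
    zify [show 1 ≤ p by omega, show 1 ≤ q by omega, show 1 ≤ 2 * g by omega]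
    ring
  -- now assemble
  have hfinS : (Sᶜ : Set ℕ).Finite := by rw [hTS]; exact T.finite_toSet
  refine ⟨hfinS, ?_, ?_, ?_⟩
  · rw [hTS, Set.ncard_coe_finset, hTcard]
  · -- 2*N - 1 = F is a gap
    have hFT : F ∈ T := by
      rw [hTdef]
      refine Finset.mem_biUnion.mpr ⟨p - 1, Finset.mem_range.mpr (by omega), ?_⟩
      rw [hCdef]
      simp only [Finset.mem_union, Finset.mem_image]
      exact Or.inl ⟨2 * g - 1, hGtop, rfl⟩
    have : (2 * N - 1) ∈ (Sᶜ : Set ℕ) := by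
      rw [hTS]
      have : 2 * N - 1 = F := by omega
      rw [this]
      exact hFT
    exact this
  · intro m hm
    by_contra hmS
    have hmT : m ∈ (Sᶜ : Set ℕ) := hmS
    rw [hTS] at hmT
    obtain ⟨b, hb, hmC⟩ := Finset.mem_biUnion.mp hmT
    have := hCle b (Finset.mem_range.mp hb) m hmC
    omega
end

section
/- Let g >= 1 and S subset of Z_{>=0} with 0 in S, Z_{>=2g} subset of S, #(S intersect [0,2g)) = g, and the symmetry phi(2g-v) = g - v + phi(v) for 0 <= v <= 2g, where phi(m) = #(S intersect [0,m)). Let mu = min_{1<=v<=2g-1} 2 phi(v)/v, Upsilon(s) = max_{0<=v<=2g}(-2 phi(v) - s(g-v)), and Upsilon^{tr}(s) = max_{1<=v<=2g-1}(-2 phi(v) - s(g-v)). Then for all s with mu <= s <= 2 - mu, Upsilon^{tr}(s) = Upsilon(s). -/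
/-- On the interval `μ ≤ s ≤ 2 - μ`, the truncated Upsilon invariant coincides with
the full Upsilon invariant. -/
theorem stmt17 (g : ℕ) (hg : 1 ≤ g) (S : Set ℕ) (h0 : 0 ∈ S)
    (hup : ∀ m, 2 * g ≤ m → m ∈ S) (hcard : (S ∩ Set.Iio (2 * g)).ncard = g)
    (phi : ℕ → ℕ) (hphi : ∀ m, phi m = (S ∩ Set.Iio m).ncard)
    (hsym : ∀ v ≤ 2 * g, (phi (2 * g - v) : ℤ) = (g : ℤ) - v + phi v)
    (mu : ℝ)
    (hmu : mu = (Finset.Icc 1 (2 * g - 1)).inf' (Finset.nonempty_Icc.mpr (by omega))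
      fun v => 2 * (phi v : ℝ) / v)
    (s : ℝ) (hs1 : mu ≤ s) (hs2 : s ≤ 2 - mu) :
    ((Finset.Icc 1 (2 * g - 1)).sup' (Finset.nonempty_Icc.mpr (by omega))
        fun v => -2 * (phi v : ℝ) - s * ((g : ℝ) - v)) =
    ((Finset.Icc 0 (2 * g)).sup' (Finset.nonempty_Icc.mpr (by omega))
        fun v => -2 * (phi v : ℝ) - s * ((g : ℝ) - v)) := by
  set F : ℕ → ℝ := fun v => -2 * (phi v : ℝ) - s * ((g : ℝ) - v) with hF
  -- phi 0 = 0
  have hphi0 : phi 0 = 0 := by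
    have : S ∩ Set.Iio 0 = ∅ := by
      ext x; simp
    rw [hphi, this, Set.ncard_empty]
  -- phi (2g) = g
  have hphi2g : phi (2 * g) = g := by rw [hphi]; exact hcard
  -- minimizer
  obtain ⟨v0, hv0mem, hv0⟩ := Finset.exists_mem_eq_inf'
    (Finset.nonempty_Icc.mpr (show (1:ℕ) ≤ 2 * g - 1 by omega))
    (fun v => 2 * (phi v : ℝ) / v)
  rw [← hmu] at hv0
  simp only [Finset.mem_Icc] at hv0mem
  have hv0l : 1 ≤ v0 := hv0mem.1
  have hv0r : v0 ≤ 2 * g - 1 := hv0mem.2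
  have hv0pos : (0 : ℝ) < v0 := by exact_mod_cast hv0l
  have hkey : mu * v0 = 2 * (phi v0 : ℝ) := by
    rw [hv0]; field_simp
  apply le_antisymm
  · apply Finset.sup'_le
    intro v hv
    apply Finset.le_sup'
    simp only [Finset.mem_Icc] at hv ⊢
    omega
  · apply Finset.sup'_le
    intro v hv
    simp only [Finset.mem_Icc] at hv
    rcases eq_or_ne v 0 with rfl | hne0
    · -- F 0 ≤ F v0
      refine le_trans ?_ (Finset.le_sup' F (Finset.mem_Icc.mpr ⟨hv0l, hv0r⟩))
      have : mu * v0 ≤ s * v0 := by nlinarith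
      rw [hkey] at this
      simp only [hF, hphi0]
      push_cast
      nlinarith
    · rcases eq_or_ne v (2 * g) with rfl | hne2
      · -- F (2g) ≤ F (2g - v0)
        have hw : 2 * g - v0 ∈ Finset.Icc 1 (2 * g - 1) := Finset.mem_Icc.mpr ⟨by omega, by omega⟩
        refine le_trans ?_ (Finset.le_sup' F hw)
        have hsymv := hsym v0 (by omega)
        have hcast : (phi (2 * g - v0) : ℝ) = (g : ℝ) - v0 + phi v0 := by
          exact_mod_cast hsymv
        have hwcast : ((2 * g - v0 : ℕ) : ℝ) = 2 * (g : ℝ) - v0 := by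
          have : v0 ≤ 2 * g := by omega
          push_cast [Nat.cast_sub this]; ring
        have h2 : s * v0 ≤ (2 - mu) * v0 := by nlinarith
        simp only [hF, hphi2g, hcast, hwcast]
        push_cast
        nlinarith
      · exact Finset.le_sup' F (Finset.mem_Icc.mpr ⟨by omega, by omega⟩)
end
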